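/- arXiv:1612.03375 — 3 statements merged into one kernel-verified Lean document; each statement's English description precedes it below -/
import Mathlib

section
/- There exists an absolute constant c > 0 such that for all integers k ≥ 1, 1 ≤ Δ ≤ k/2, and n, if n ≤ c·(k − 2Δ)/√k, then for every estimator Ĉ : (Fin k)^n → ℤ there exists a coloring f : Fin k → Fin k such that, letting C(f) be the number of distinct values of f and X_1,…,X_n be i.i.d. uniform on Fin k, one has P( |Ĉ(f(X_1),…,f(X_n)) − C(f)| ≥ Δ ) > 0.1. -/
open Finset MeasureTheory ProbabilityTheory
open scoped ENNReal NNReal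

section AuxStmt12

variable {k n r : ℕ}

private lemma pi_unif_apply (hk : 1 ≤ k) (S : Set (Fin n → Fin k)) [DecidablePred (· ∈ S)] :
    Measure.pi (fun _ : Fin n => uniformOn (Set.univ : Set (Fin k))) S
      = ((Finset.univ.filter (· ∈ S)).card : ℝ≥0∞) / (k : ℝ≥0∞) ^ n := by
  classical
  have hne : Nonempty (Fin k) := ⟨⟨0, hk⟩⟩
  haveI : IsProbabilityMeasure (uniformOn (Set.univ : Set (Fin k))) :=
    uniformOn_isProbabilityMeasure Set.finite_univ Set.univ_nonempty
  set μ := Measure.pi (fun _ : Fin n => uniformOn (Set.univ : Set (Fin k))) with hμ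
  have hsing : ∀ x : Fin n → Fin k, μ {x} = ((k : ℝ≥0∞))⁻¹ ^ n := by
    intro x
    have hx : ({x} : Set (Fin n → Fin k)) = Set.pi Set.univ (fun i => {x i}) := by
      ext y
      simp [Set.mem_pi, funext_iff]
    rw [hx, hμ, Measure.pi_pi]
    have : ∀ i : Fin n, uniformOn (Set.univ : Set (Fin k)) {x i} = (k : ℝ≥0∞)⁻¹ := by
      intro i
      rw [uniformOn_univ, Measure.count_singleton]
      simp [Fintype.card_fin, one_div]
    simp [this]
  have hS : S = ⋃ x ∈ (Finset.univ.filter (· ∈ S)), ({x} : Set (Fin n → Fin k)) := by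
    ext y; simp
  rw [show μ S = μ (⋃ x ∈ (Finset.univ.filter (· ∈ S)), ({x} : Set (Fin n → Fin k))) from by
      rw [← hS],
    measure_biUnion_finset]
  · simp only [hsing, Finset.sum_const, nsmul_eq_mul]
    rw [div_eq_mul_inv, ← ENNReal.inv_pow]
  · intro x hx y hy hxy
    simp [Set.disjoint_singleton, hxy]
  · intro x hx
    exact measurableSet_singleton x

private lemma le_tenth {c K : ℕ} (hK : 1 ≤ K) (h : (c : ℝ≥0∞) / K ≤ 1 / 10) : 10 * c ≤ K := by
  have hK0 : (K : ℝ≥0∞) ≠ 0 := by exact_mod_cast (Nat.pos_of_ne_zero (by omega)).ne'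
  have hKt : (K : ℝ≥0∞) ≠ ⊤ := ENNReal.natCast_ne_top K
  have h1 : (c : ℝ≥0∞) ≤ 1 / 10 * K := by
    calc (c : ℝ≥0∞) = (c : ℝ≥0∞) / K * K := (ENNReal.div_mul_cancel hK0 hKt).symm
    _ ≤ 1 / 10 * K := by exact mul_le_mul_left h _
  have h2 : (10 : ℝ≥0∞) * c ≤ 10 * (1 / 10 * K) := mul_le_mul_right h1 _
  have h3 : (10 : ℝ≥0∞) * (1 / 10 * K) = K := by
    rw [← mul_assoc, one_div, ENNReal.mul_inv_cancel (by norm_num) (by norm_num), one_mul]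
  rw [h3] at h2
  have h4 : ((10 * c : ℕ) : ℝ≥0∞) ≤ (K : ℝ≥0∞) := by push_cast; exact h2
  exact_mod_cast h4

private def pairEquiv (i j : Fin n) (hij : i ≠ j) :
    (Fin n → Fin k) ≃ (Fin k × Fin k) × ({t : Fin n // t ≠ i ∧ t ≠ j} → Fin k) where
  toFun x := ((x i, x j), fun t => x t.1)
  invFun p := fun t => if h : t = i then p.1.1 else if h' : t = j then p.1.2 else p.2 ⟨t, h, h'⟩
  left_inv x := by
    funext t
    by_cases h : t = i
    · subst h; simp
    · by_cases h' : t = j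
      · subst h'; simp [h]
      · simp [h, h']
  right_inv p := by
    obtain ⟨⟨a, b⟩, y⟩ := p
    refine Prod.ext (Prod.ext ?_ ?_) ?_ <;> simp [hij, Ne.symm hij]
    funext t
    obtain ⟨t, h1, h2⟩ := t
    simp [h1, h2]

private lemma card_filter_pair (i j : Fin n) (hij : i ≠ j) (R : Fin k → Fin k → Prop)
    [DecidableRel R] :
    (univ.filter fun x : Fin n → Fin k => R (x i) (x j)).card * k ^ 2
      = (univ.filter fun p : Fin k × Fin k => R p.1 p.2).card * k ^ n := by
  classical
  set m := Fintype.card {t : Fin n // t ≠ i ∧ t ≠ j} with hm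
  have htot : k ^ n = k ^ 2 * k ^ m := by
    have := Fintype.card_congr (pairEquiv (k := k) i j hij)
    simpa [Fintype.card_fun, Fintype.card_fin, pow_two, mul_assoc] using this
  have hfil : (univ.filter fun x : Fin n → Fin k => R (x i) (x j)).card
      = ((univ.filter fun p : Fin k × Fin k => R p.1 p.2) ×ˢ
          (univ : Finset ({t : Fin n // t ≠ i ∧ t ≠ j} → Fin k))).card := by
    apply Finset.card_bij' (fun x _ => pairEquiv i j hij x)
      (fun p _ => (pairEquiv i j hij).symm p)
    · intro x hx
      simp only [mem_filter, mem_univ, true_and] at hx ⊢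
      rw [Finset.mem_product]
      exact ⟨by simpa [pairEquiv] using hx, Finset.mem_univ _⟩
    · intro p hp
      rw [Finset.mem_product] at hp
      simp only [mem_filter, mem_univ, true_and] at hp ⊢
      have h1 : (pairEquiv (k := k) i j hij ((pairEquiv i j hij).symm p)).1 = p.1 := by
        rw [Equiv.apply_symm_apply]
      have h2 : ((pairEquiv (k := k) i j hij).symm p i,
          (pairEquiv (k := k) i j hij).symm p j) = p.1 := h1
      rw [show ((pairEquiv (k := k) i j hij).symm p) i = p.1.1 from congrArg Prod.fst h2,
        show ((pairEquiv (k := k) i j hij).symm p) j = p.1.2 from congrArg Prod.snd h2]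
      exact hp.1
    · intro x _; exact Equiv.symm_apply_apply _ _
    · intro p _; exact Equiv.apply_symm_apply _ _
  rw [hfil, Finset.card_product, Finset.card_univ, Fintype.card_fun, Fintype.card_fin, ← hm,
    mul_assoc, mul_comm (k ^ m) (k ^ 2), ← htot]

private lemma collision_bound (h : Fin k → Fin k) :
    (univ.filter fun x : Fin n → Fin k => ¬ Function.Injective fun t => h (x t)).card * k ^ 2
      ≤ n * n * ((univ.filter fun p : Fin k × Fin k => h p.1 = h p.2).card * k ^ n) := by
  classical
  have hsub : (univ.filter fun x : Fin n → Fin k => ¬ Function.Injective fun t => h (x t))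
      ⊆ (univ.offDiag).biUnion
          (fun p => univ.filter fun x : Fin n → Fin k => h (x p.1) = h (x p.2)) := by
    intro x hx
    simp only [mem_filter, mem_univ, true_and] at hx
    rw [Function.not_injective_iff] at hx
    obtain ⟨s, t, hst, hne⟩ := hx
    rw [Finset.mem_biUnion]
    exact ⟨(s, t), by simp [Finset.mem_offDiag, hne], by simp [hst]⟩
  calc (univ.filter fun x : Fin n → Fin k => ¬ Function.Injective fun t => h (x t)).card * k ^ 2
      ≤ ((univ.offDiag).biUnion
          (fun p => univ.filter fun x : Fin n → Fin k => h (x p.1) = h (x p.2))).card * k ^ 2 :=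
        Nat.mul_le_mul_right _ (Finset.card_le_card hsub)
    _ ≤ (∑ p ∈ univ.offDiag,
          (univ.filter fun x : Fin n → Fin k => h (x p.1) = h (x p.2)).card) * k ^ 2 :=
        Nat.mul_le_mul_right _ Finset.card_biUnion_le
    _ = ∑ p ∈ univ.offDiag,
          ((univ.filter fun x : Fin n → Fin k => h (x p.1) = h (x p.2)).card * k ^ 2) := by
        rw [Finset.sum_mul]
    _ = ∑ p ∈ univ.offDiag,
          ((univ.filter fun q : Fin k × Fin k => h q.1 = h q.2).card * k ^ n) := by
        refine Finset.sum_congr rfl fun p hp => ?_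
        rw [Finset.mem_offDiag] at hp
        exact card_filter_pair p.1 p.2 hp.2.2 (fun a b => h a = h b)
    _ = (univ.offDiag).card
          * ((univ.filter fun q : Fin k × Fin k => h q.1 = h q.2).card * k ^ n) := by
        rw [Finset.sum_const, smul_eq_mul]
    _ ≤ n * n * ((univ.filter fun q : Fin k × Fin k => h q.1 = h q.2).card * k ^ n) := by
        apply Nat.mul_le_mul_right
        rw [Finset.offDiag_card]
        simp only [Finset.card_univ, Fintype.card_fin]
        exact Nat.sub_le _ _

private lemma perm_count_eq (Q : (Fin n → Fin k) → Prop) [DecidablePred Q]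
    {w w' : Fin n → Fin k} (hw : Function.Injective w) (hw' : Function.Injective w') :
    (univ.filter fun σ : Equiv.Perm (Fin k) => Q fun t => σ (w t)).card
      = (univ.filter fun σ : Equiv.Perm (Fin k) => Q fun t => σ (w' t)).card := by
  classical
  obtain ⟨ρ, hρ⟩ : ∃ ρ : Equiv.Perm (Fin k), ∀ t, ρ (w' t) = w t := by
    let e : {x : Fin k // x ∈ Set.range w'} ≃ {x : Fin k // x ∈ Set.range w} :=
      ((Equiv.ofInjective w' hw').symm.trans (Equiv.ofInjective w hw))
    refine ⟨Equiv.extendSubtype e, fun t => ?_⟩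
    rw [Equiv.extendSubtype_apply_of_mem e _ (Set.mem_range_self t)]
    show ((Equiv.ofInjective w hw)
      ((Equiv.ofInjective w' hw').symm ⟨w' t, Set.mem_range_self t⟩) : Fin k) = w t
    rw [Equiv.ofInjective_symm_apply]
    rfl
  apply Finset.card_bij' (fun σ _ => ρ.trans σ) (fun σ _ => ρ.symm.trans σ)
  · intro σ hσ
    simp only [mem_filter, mem_univ, true_and] at hσ ⊢
    have : (fun t => (ρ.trans σ) (w' t)) = fun t => σ (w t) := by
      funext t; simp [Equiv.trans_apply, hρ]
    rw [this]; exact hσ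
  · intro σ hσ
    simp only [mem_filter, mem_univ, true_and] at hσ ⊢
    have : (fun t => (ρ.symm.trans σ) (w t)) = fun t => σ (w' t) := by
      funext t
      simp only [Equiv.trans_apply]
      rw [← hρ t, Equiv.symm_apply_apply]
    rw [this]; exact hσ
  · intro σ _; ext x; simp
  · intro σ _; ext x; simp

private lemma sum_perm_count (h : Fin k → Fin k) (Q : (Fin n → Fin k) → Prop) [DecidablePred Q]
    {w₀ : Fin n → Fin k} (hw₀ : Function.Injective w₀) :
    ∑ σ : Equiv.Perm (Fin k),
        (univ.filter fun x : Fin n → Fin k =>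
          Function.Injective (fun t => h (x t)) ∧ Q fun t => σ (h (x t))).card
      = (univ.filter fun x : Fin n → Fin k => Function.Injective (fun t => h (x t))).card
        * (univ.filter fun σ : Equiv.Perm (Fin k) => Q fun t => σ (w₀ t)).card := by
  classical
  simp only [Finset.card_filter]
  rw [Finset.sum_comm]
  have step : ∀ x : Fin n → Fin k,
      (∑ σ : Equiv.Perm (Fin k),
        if Function.Injective (fun t => h (x t)) ∧ Q fun t => σ (h (x t)) then 1 else 0)
      = if Function.Injective (fun t => h (x t)) then
          (∑ σ : Equiv.Perm (Fin k), if Q fun t => σ (w₀ t) then 1 else 0) else 0 := by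
    intro x
    by_cases hx : Function.Injective (fun t => h (x t))
    · simp only [hx, true_and, if_true]
      have := perm_count_eq Q hx hw₀
      simp only [Finset.card_filter] at this
      exact this
    · simp [hx]
  rw [Finset.sum_congr rfl fun x _ => step x, Finset.sum_ite, Finset.sum_const,
    Finset.sum_const_zero, add_zero, smul_eq_mul, Finset.card_filter]

private lemma modpairs (hr : 1 ≤ r) (hrk : r ≤ k) :
    (univ.filter fun p : Fin k × Fin k => p.1.val % r = p.2.val % r).card * r
      ≤ 2 * (k * k) := by
  classical
  have hfib : ∀ a : Fin k,
      ((univ.filter fun p : Fin k × Fin k => p.1.val % r = p.2.val % r).filter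
        fun p => p.1 = a).card ≤ k / r + 1 := by
    intro a
    have hlt : ∀ p : Fin k × Fin k, p.2.val / r < k / r + 1 := by
      intro p
      have : p.2.val / r ≤ k / r := Nat.div_le_div_right (le_of_lt p.2.isLt)
      omega
    have hinj : Set.InjOn (fun p : Fin k × Fin k => (⟨p.2.val / r, hlt p⟩ : Fin (k / r + 1)))
        ((univ.filter fun p : Fin k × Fin k => p.1.val % r = p.2.val % r).filter
          fun p => p.1 = a) := by
      intro p hp q hq hpq
      simp only [coe_filter, Set.mem_setOf_eq, mem_filter, mem_univ, true_and] at hp hq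
      have h1 : p.2.val / r = q.2.val / r := by
        simpa using congrArg Fin.val hpq
      have h2 : p.2.val % r = q.2.val % r := by
        rw [← hp.1, hp.2, ← hq.1, hq.2]
      have hp2 : p.2.val = q.2.val := by
        rw [← Nat.div_add_mod p.2.val r, ← Nat.div_add_mod q.2.val r, h1, h2]
      have : p.2 = q.2 := Fin.ext hp2
      obtain ⟨p1, p2⟩ := p; obtain ⟨q1, q2⟩ := q
      simp only at this hp hq ⊢
      rw [hp.2, hq.2, this]
    have := Finset.card_le_card_of_injOn _ (fun p _ => mem_univ _) hinj
    simpa using this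
  have hcard : (univ.filter fun p : Fin k × Fin k => p.1.val % r = p.2.val % r).card
      ≤ k * (k / r + 1) := by
    rw [Finset.card_eq_sum_card_fiberwise
      (f := fun p : Fin k × Fin k => p.1) (t := univ) (fun x _ => mem_univ _)]
    calc ∑ a : Fin k, ((univ.filter fun p : Fin k × Fin k => p.1.val % r = p.2.val % r).filter
            fun p => p.1 = a).card
        ≤ ∑ _a : Fin k, (k / r + 1) := Finset.sum_le_sum fun a _ => hfib a
      _ = k * (k / r + 1) := by
          rw [Finset.sum_const, Finset.card_univ, Fintype.card_fin, smul_eq_mul]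
  calc (univ.filter fun p : Fin k × Fin k => p.1.val % r = p.2.val % r).card * r
      ≤ k * (k / r + 1) * r := Nat.mul_le_mul_right _ hcard
    _ = k * (k / r * r + r) := by ring
    _ ≤ k * (k + k) := by
        have := Nat.div_mul_le_self k r
        exact Nat.mul_le_mul_left _ (by omega)
    _ = 2 * (k * k) := by ring

private lemma diag_count :
    (univ.filter fun p : Fin k × Fin k => p.1 = p.2).card = k := by
  classical
  have : (univ.filter fun p : Fin k × Fin k => p.1 = p.2) = (univ : Finset (Fin k)).diag := by
    ext p; simp [Finset.mem_diag]
  rw [this, Finset.diag_card, Finset.card_univ, Fintype.card_fin]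

private lemma omegaA {N : ℕ} (h1 : 10 * N ≤ 1) (hc : 0 < N) : False := by omega

private lemma omegaB {Δ k : ℕ} {c : ℤ} (hΔ : 1 ≤ Δ) (hΔk : 2 * Δ ≤ k)
    (h1 : ¬ ((Δ : ℤ) ≤ |c - (k : ℤ)|)) (h2 : ¬ ((Δ : ℤ) ≤ |c - (1 : ℤ)|)) : False := by
  rw [not_le, abs_lt] at h1 h2
  omega

private lemma omegaC4 {A B T : ℕ} (h1 : A + B = T) (h2 : 4 * B ≤ T) : T ≤ 2 * A := by omega

private lemma omegaC2 {A B T : ℕ} (h1 : A + B = T) (h2 : 2 * B ≤ T) : T ≤ 2 * A := by omega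

private lemma omegaE {I T : ℕ} (h : T ≤ 2 * I) (h1 : 1 ≤ T) : 0 < I := by omega

private lemma omegaF {Δ k : ℕ} {c R : ℤ} (hR : R = (k : ℤ) - 2 * Δ)
    (h2 : |c - (k : ℤ)| < (Δ : ℤ)) : (Δ : ℤ) ≤ |c - R| := by
  rw [abs_lt] at h2
  rw [le_abs]
  omega

private lemma omegaD {J1 J2 F : ℕ} (hpart : J1 + J2 = F) (hF1 : 1 ≤ F)
    (h1 : 10 * J1 ≤ 2 * F) (h2 : 10 * J2 ≤ 2 * F) : False := by omega

end AuxStmt12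

set_option maxHeartbeats 2000000 in
/-- There is an absolute constant `c > 0` such that for all integers `k ≥ 1`,
`1 ≤ Δ ≤ k/2`, and `n` with `n ≤ c·(k − 2Δ)/√k`: for every estimator `Ĉ : (Fin k)^n → ℤ`
there is a coloring `f : Fin k → Fin k` such that, with `C(f)` the number of distinct values
of `f` and `X_1,…,X_n` i.i.d. uniform on `Fin k` (so that the sampled colors
`(f(X_1),…,f(X_n))` are distributed according to the product of uniform measures),
`P(|Ĉ(f(X_1),…,f(X_n)) − C(f)| ≥ Δ) > 0.1`. -/
theorem stmt12 : ∃ c : ℝ, 0 < c ∧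
    ∀ k Δ n : ℕ, 1 ≤ k → 1 ≤ Δ → 2 * Δ ≤ k →
      (n : ℝ) ≤ c * ((k : ℝ) - 2 * Δ) / Real.sqrt k →
      ∀ Chat : (Fin n → Fin k) → ℤ,
        ∃ f : Fin k → Fin k,
          (1 / 10 : ℝ≥0∞) <
            Measure.pi (fun _ : Fin n => uniformOn (Set.univ : Set (Fin k)))
              {x : Fin n → Fin k |
                (Δ : ℤ) ≤ |Chat (fun t => f (x t)) - ((Finset.univ.image f).card : ℤ)|} := by
  classical
  refine ⟨1/2, by norm_num, ?_⟩
  intro k Δ n hk hΔ hΔk hn Chat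
  by_contra hcon
  push_neg at hcon
  have hkn1 : 1 ≤ k ^ n := Nat.one_le_pow _ _ (by omega)
  -- counting form of the assumption
  have key : ∀ f : Fin k → Fin k,
      10 * (univ.filter fun x : Fin n → Fin k =>
        (Δ : ℤ) ≤ |Chat (fun t => f (x t)) - ((Finset.univ.image f).card : ℤ)|).card ≤ k ^ n := by
    intro f
    have h1 := hcon f
    rw [pi_unif_apply hk] at h1
    have h2 : (univ.filter (· ∈ {x : Fin n → Fin k |
        (Δ : ℤ) ≤ |Chat (fun t => f (x t)) - ((Finset.univ.image f).card : ℤ)|}))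
        = (univ.filter fun x : Fin n → Fin k =>
            (Δ : ℤ) ≤ |Chat (fun t => f (x t)) - ((Finset.univ.image f).card : ℤ)|) := by
      apply Finset.filter_congr; intro x _; simp [Set.mem_setOf_eq]
    rw [h2] at h1
    apply le_tenth hkn1
    rw [show ((k ^ n : ℕ) : ℝ≥0∞) = (k : ℝ≥0∞) ^ n by push_cast; ring]
    exact h1
  rcases Nat.eq_zero_or_pos n with hn0 | hnpos
  · -- n = 0 : the estimator is constant; colorings with C = k and C = 1 cannot both be close
    subst hn0
    have hzero : ∀ f : Fin k → Fin k, ∀ x : Fin 0 → Fin k,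
        ¬ ((Δ : ℤ) ≤ |Chat (fun t => f (x t)) - ((Finset.univ.image f).card : ℤ)|) := by
      intro f x hx
      have h1 := key f
      rw [pow_zero] at h1
      have hmem : x ∈ univ.filter (fun x : Fin 0 → Fin k =>
          (Δ : ℤ) ≤ |Chat (fun t => f (x t)) - ((Finset.univ.image f).card : ℤ)|) :=
        Finset.mem_filter.mpr ⟨mem_univ _, hx⟩
      have hc := Finset.card_pos.mpr ⟨x, hmem⟩
      exact omegaA h1 hc
    set y0 : Fin 0 → Fin k := fun t => t.elim0 with hy0
    have himid : ((univ.image (id : Fin k → Fin k)).card : ℤ) = k := by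
      simp
    have hne : Nonempty (Fin k) := ⟨⟨0, by omega⟩⟩
    have himc : ((univ.image (fun _ : Fin k => (⟨0, by omega⟩ : Fin k))).card : ℤ) = 1 := by
      rw [Finset.image_const Finset.univ_nonempty]
      simp
    have hid : ¬ ((Δ : ℤ) ≤ |Chat y0 - (k : ℤ)|) := by
      have h := hzero id y0
      rwa [show (fun t : Fin 0 => id (y0 t)) = y0 from funext fun t => t.elim0, himid] at h
    have hconst : ¬ ((Δ : ℤ) ≤ |Chat y0 - (1 : ℤ)|) := by
      have h := hzero (fun _ => (⟨0, by omega⟩ : Fin k)) y0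
      rwa [show (fun t : Fin 0 => (fun _ : Fin k => (⟨0, by omega⟩ : Fin k)) (y0 t)) = y0 from
        funext fun t => t.elim0, himc] at h
    exact omegaB hΔ hΔk hid hconst
  · -- main case : n ≥ 1
    set r := k - 2 * Δ with hrdef
    have hrk : r ≤ k := Nat.sub_le _ _
    have hkR : (1 : ℝ) ≤ (k : ℝ) := by exact_mod_cast hk
    have hs : (0 : ℝ) < Real.sqrt k := Real.sqrt_pos.mpr (by linarith)
    have hns : (n : ℝ) * Real.sqrt k ≤ 1 / 2 * ((k : ℝ) - 2 * Δ) := (le_div_iff₀ hs).mp hn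
    have hr1 : 1 ≤ r := by
      by_contra hcontra
      have hk2 : k = 2 * Δ := by omega
      have : ((k : ℝ) - 2 * Δ) = 0 := by
        rw [hk2]; push_cast; ring
      rw [this] at hns
      have hn1R : (1 : ℝ) ≤ (n : ℝ) := by exact_mod_cast hnpos
      nlinarith
    have hrcast : (r : ℝ) = (k : ℝ) - 2 * Δ := by
      rw [hrdef]
      push_cast [Nat.cast_sub hΔk]
      ring
    have hrkR : (r : ℝ) ≤ (k : ℝ) := by exact_mod_cast hrk
    have hsq : Real.sqrt k ^ 2 = (k : ℝ) := Real.sq_sqrt (by linarith)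
    have h4n2r : 4 * n ^ 2 ≤ r := by
      have hnns : (0 : ℝ) ≤ (n : ℝ) * Real.sqrt k :=
        mul_nonneg (Nat.cast_nonneg n) (le_of_lt hs)
      have hrR0 : (0 : ℝ) ≤ (r : ℝ) := Nat.cast_nonneg r
      have hgoal : (4 * n ^ 2 : ℝ) ≤ (r : ℝ) := by
        rw [← hrcast] at hns
        nlinarith [hns, hsq, hrkR, hnns, hrR0, hkR, sq_nonneg ((n : ℝ) * Real.sqrt k)]
      exact_mod_cast hgoal
    have h4n2k : 4 * n ^ 2 ≤ k := le_trans h4n2r hrk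
    have hnk : n ≤ k := by
      have h1 : n ≤ n ^ 2 := by nlinarith
      omega
    -- the merging coloring g
    set g : Fin k → Fin k :=
      fun i => ⟨i.val % r, lt_of_lt_of_le (Nat.mod_lt _ hr1) hrk⟩ with hg
    have himg : (univ.image g).card = r := by
      have him : univ.image g
          = univ.image (fun c : Fin r => (⟨c.val, lt_of_lt_of_le c.isLt hrk⟩ : Fin k)) := by
        ext a
        simp only [mem_image, mem_univ, true_and]
        constructor
        · rintro ⟨i, rfl⟩
          exact ⟨⟨i.val % r, Nat.mod_lt _ hr1⟩, rfl⟩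
        · rintro ⟨c, rfl⟩
          refine ⟨⟨c.val, lt_of_lt_of_le c.isLt hrk⟩, ?_⟩
          apply Fin.ext
          simp [hg, Nat.mod_eq_of_lt c.isLt]
      rw [him, Finset.card_image_of_injective _
        (fun a b hab => Fin.ext (by simpa using congrArg Fin.val hab))]
      simp
    -- the base injective sequence
    set w₀ : Fin n → Fin k := fun t => (⟨t.val, lt_of_lt_of_le t.isLt hnk⟩ : Fin k) with hw₀def
    have hw₀ : Function.Injective w₀ := by
      intro a b hab
      exact Fin.ext (by simpa [hw₀def] using congrArg Fin.val hab)
    -- the partition of permutations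
    set Q1 : (Fin n → Fin k) → Prop := fun y => |Chat y - (k : ℤ)| < Δ with hQ1
    set J1 := (univ.filter fun σ : Equiv.Perm (Fin k) => Q1 fun t => σ (w₀ t)).card with hJ1
    set J2 := (univ.filter fun σ : Equiv.Perm (Fin k) => ¬ Q1 fun t => σ (w₀ t)).card with hJ2
    set F := Fintype.card (Equiv.Perm (Fin k)) with hF
    have hpart : J1 + J2 = F := by
      rw [hJ1, hJ2, Finset.card_filter_add_card_filter_not, Finset.card_univ]
    have hF1 : 1 ≤ F := Fintype.card_pos
    -- counts of injective-observation samples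
    set I := (univ.filter fun x : Fin n → Fin k =>
      Function.Injective (fun t => (fun a => a) (x t))).card with hI
    set M := (univ.filter fun x : Fin n → Fin k =>
      Function.Injective (fun t => g (x t))).card with hM
    -- bound k^n ≤ 2I
    have hItot : I + (univ.filter fun x : Fin n → Fin k =>
        ¬ Function.Injective (fun t => (fun a => a) (x t))).card = k ^ n := by
      rw [hI, Finset.card_filter_add_card_filter_not, Finset.card_univ]
      simp [Fintype.card_fun]
    have hInon : 4 * (univ.filter fun x : Fin n → Fin k =>
        ¬ Function.Injective (fun t => (fun a => a) (x t))).card ≤ k ^ n := by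
      have hcb := collision_bound (n := n) (fun a : Fin k => a)
      rw [diag_count] at hcb
      have h1 : 4 * ((univ.filter fun x : Fin n → Fin k =>
          ¬ Function.Injective (fun t => (fun a => a) (x t))).card * k ^ 2)
          ≤ 4 * (n * n * (k * k ^ n)) := Nat.mul_le_mul_left 4 hcb
      have h2 : 4 * (n * n * (k * k ^ n)) ≤ k ^ n * k ^ 2 := by
        have : 4 * (n * n) ≤ k := by nlinarith
        calc 4 * (n * n * (k * k ^ n)) = (4 * (n * n)) * (k * k ^ n) := by ring
          _ ≤ k * (k * k ^ n) := Nat.mul_le_mul_right _ this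
          _ = k ^ n * k ^ 2 := by ring
      have h3 : (4 * (univ.filter fun x : Fin n → Fin k =>
          ¬ Function.Injective (fun t => (fun a => a) (x t))).card) * k ^ 2
          ≤ k ^ n * k ^ 2 := by
        calc (4 * (univ.filter fun x : Fin n → Fin k =>
              ¬ Function.Injective (fun t => (fun a => a) (x t))).card) * k ^ 2
            = 4 * ((univ.filter fun x : Fin n → Fin k =>
              ¬ Function.Injective (fun t => (fun a => a) (x t))).card * k ^ 2) := by ring
          _ ≤ k ^ n * k ^ 2 := le_trans h1 h2
      exact Nat.le_of_mul_le_mul_right h3 (by positivity)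
    have hI2 : k ^ n ≤ 2 * I := omegaC4 hItot hInon
    -- bound k^n ≤ 2M
    have hMtot : M + (univ.filter fun x : Fin n → Fin k =>
        ¬ Function.Injective (fun t => g (x t))).card = k ^ n := by
      rw [hM, Finset.card_filter_add_card_filter_not, Finset.card_univ]
      simp [Fintype.card_fun]
    have hMnon : 2 * (univ.filter fun x : Fin n → Fin k =>
        ¬ Function.Injective (fun t => g (x t))).card ≤ k ^ n := by
      have hcb := collision_bound (n := n) g
      have hpair : (univ.filter fun p : Fin k × Fin k => g p.1 = g p.2)
          = (univ.filter fun p : Fin k × Fin k => p.1.val % r = p.2.val % r) := by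
        apply Finset.filter_congr
        intro p _
        constructor
        · intro hgp; simpa [hg] using congrArg Fin.val hgp
        · intro hv; exact Fin.ext (by simpa [hg] using hv)
      rw [hpair] at hcb
      have hmp := modpairs hr1 hrk
      set NC := (univ.filter fun x : Fin n → Fin k =>
        ¬ Function.Injective (fun t => g (x t))).card with hNC
      set P2 := (univ.filter fun p : Fin k × Fin k => p.1.val % r = p.2.val % r).card with hP2
      -- NC * k^2 ≤ n*n*(P2*k^n),  P2 * r ≤ 2*k*k,  4n^2 ≤ r
      have hstep : (2 * NC) * (2 * n ^ 2 * k ^ 2) ≤ k ^ n * (2 * n ^ 2 * k ^ 2) := by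
        calc (2 * NC) * (2 * n ^ 2 * k ^ 2) = (NC * k ^ 2) * (4 * n ^ 2) := by ring
          _ ≤ (n * n * (P2 * k ^ n)) * (4 * n ^ 2) := Nat.mul_le_mul_right _ hcb
          _ ≤ (n * n * (P2 * k ^ n)) * r := Nat.mul_le_mul_left _ h4n2r
          _ = (n * n) * ((P2 * r) * k ^ n) := by ring
          _ ≤ (n * n) * ((2 * (k * k)) * k ^ n) := by
              apply Nat.mul_le_mul_left
              exact Nat.mul_le_mul_right _ hmp
          _ = k ^ n * (2 * n ^ 2 * k ^ 2) := by ring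
      exact Nat.le_of_mul_le_mul_right hstep (by positivity)
    have hM2 : k ^ n ≤ 2 * M := omegaC2 hMtot hMnon
    have hIpos : 0 < I := omegaE hI2 hkn1
    have hMpos : 0 < M := omegaE hM2 hkn1
    -- permutation-summed bounds
    have hsum2 : 10 * (I * J2) ≤ F * k ^ n := by
      have hsp := sum_perm_count (n := n) (fun a : Fin k => a)
        (fun y => ¬ Q1 y) hw₀
      have hterm : ∀ σ : Equiv.Perm (Fin k),
          10 * (univ.filter fun x : Fin n → Fin k =>
            Function.Injective (fun t => (fun a => a) (x t))
              ∧ ¬ Q1 fun t => σ ((fun a => a) (x t))).card ≤ k ^ n := by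
        intro σ
        have himσ : ((univ.image (⇑σ : Fin k → Fin k)).card : ℤ) = (k : ℤ) := by
          have : (univ.image (⇑σ : Fin k → Fin k)) = univ := by
            ext b
            simp only [mem_image, mem_univ, true_and, iff_true]
            exact ⟨σ.symm b, Equiv.apply_symm_apply σ b⟩
          rw [this, Finset.card_univ, Fintype.card_fin]
        refine le_trans (Nat.mul_le_mul_left 10 (Finset.card_le_card
          (Finset.monotone_filter_right univ ?_))) (key ⇑σ)
        intro x _ hx
        have h2 := hx.2
        simp only [hQ1, not_lt] at h2
        rw [himσ]
        exact h2
      calc 10 * (I * J2) = ∑ σ : Equiv.Perm (Fin k),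
            10 * (univ.filter fun x : Fin n → Fin k =>
              Function.Injective (fun t => (fun a => a) (x t))
                ∧ ¬ Q1 fun t => σ ((fun a => a) (x t))).card := by
            rw [← Finset.mul_sum, hsp]
        _ ≤ ∑ _σ : Equiv.Perm (Fin k), k ^ n := Finset.sum_le_sum fun σ _ => hterm σ
        _ = F * k ^ n := by rw [Finset.sum_const, Finset.card_univ, smul_eq_mul]
    have hsum1 : 10 * (M * J1) ≤ F * k ^ n := by
      have hsp := sum_perm_count (n := n) g Q1 hw₀
      have hterm : ∀ σ : Equiv.Perm (Fin k),
          10 * (univ.filter fun x : Fin n → Fin k =>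
            Function.Injective (fun t => g (x t))
              ∧ Q1 fun t => σ (g (x t))).card ≤ k ^ n := by
        intro σ
        have himσg : ((univ.image (fun i => σ (g i))).card : ℤ) = (r : ℤ) := by
          have h1 : (univ.image fun i => σ (g i)) = (univ.image g).image ⇑σ := by
            rw [Finset.image_image]; rfl
          rw [h1, Finset.card_image_of_injective _ σ.injective, himg]
        have hrZ : (r : ℤ) = (k : ℤ) - 2 * Δ := by
          rw [hrdef]
          push_cast [Nat.cast_sub hΔk]
          ring
        refine le_trans (Nat.mul_le_mul_left 10 (Finset.card_le_card
          (Finset.monotone_filter_right univ ?_))) (key (fun i => σ (g i)))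
        intro x _ hx
        have h2 := hx.2
        simp only [hQ1] at h2
        rw [himσg]
        exact omegaF hrZ h2
      calc 10 * (M * J1) = ∑ σ : Equiv.Perm (Fin k),
            10 * (univ.filter fun x : Fin n → Fin k =>
              Function.Injective (fun t => g (x t))
                ∧ Q1 fun t => σ (g (x t))).card := by
            rw [← Finset.mul_sum, hsp]
        _ ≤ ∑ _σ : Equiv.Perm (Fin k), k ^ n := Finset.sum_le_sum fun σ _ => hterm σ
        _ = F * k ^ n := by rw [Finset.sum_const, Finset.card_univ, smul_eq_mul]
    -- conclude
    have hc2 : 10 * J2 ≤ 2 * F := by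
      have h1 : 10 * (I * J2) ≤ F * (2 * I) := le_trans hsum2 (Nat.mul_le_mul_left _ hI2)
      have h2 : (10 * J2) * I ≤ (2 * F) * I := by
        calc (10 * J2) * I = 10 * (I * J2) := by ring
          _ ≤ F * (2 * I) := h1
          _ = (2 * F) * I := by ring
      exact Nat.le_of_mul_le_mul_right h2 hIpos
    have hc1 : 10 * J1 ≤ 2 * F := by
      have h1 : 10 * (M * J1) ≤ F * (2 * M) := le_trans hsum1 (Nat.mul_le_mul_left _ hM2)
      have h2 : (10 * J1) * M ≤ (2 * F) * M := by
        calc (10 * J1) * M = 10 * (M * J1) := by ring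
          _ ≤ F * (2 * M) := h1
          _ = (2 * F) * M := by ring
      exact Nat.le_of_mul_le_mul_right h2 hMpos
    exact omegaD hpart hF1 hc1 hc2
end

section
/- Let X be a finite set, Q a probability mass function on X with Q(x) > 0 for all x, Θ a finite set, π a probability mass function on Θ, and (P_θ)_{θ∈Θ} a family of probability mass functions on X. For any n ≥ 1, Σ_{x ∈ X^n} ( Σ_{θ∈Θ} π(θ)·∏_{t=1}^{n} P_θ(x_t) )² / ∏_{t=1}^{n} Q(x_t) = Σ_{θ, θ' ∈ Θ} π(θ)·π(θ')·( Σ_{x∈X} P_θ(x)·P_{θ'}(x)/Q(x) )^n. Equivalently, the chi-squared divergence of the mixture of n-fold products Σ_θ π(θ)·P_θ^{⊗n} from Q^{⊗n} plus 1 equals E_{θ,θ'}[ (∫ P_θ P_{θ'}/Q)^n ] for θ, θ' drawn independently from π. -/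
open Finset

/-- Let `X` be a finite set, `Q` a probability mass function on `X` with
`Q(x) > 0` for all `x`, `Θ` a finite set, `π` a probability mass function on `Θ`, and
`(P_θ)_{θ∈Θ}` a family of probability mass functions on `X`. For any `n ≥ 1`,
`Σ_{x ∈ X^n} (Σ_θ π(θ)·∏_t P_θ(x_t))² / ∏_t Q(x_t)
  = Σ_{θ,θ'} π(θ)·π(θ')·(Σ_x P_θ(x)·P_{θ'}(x)/Q(x))^n`;
equivalently, `χ²(Σ_θ π(θ)·P_θ^{⊗n} ‖ Q^{⊗n}) + 1 = E_{θ,θ'}[(∫ P_θ P_{θ'}/Q)^n]`. -/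
theorem stmt14 {X Θ : Type*} [Fintype X] [Fintype Θ]
    (Q : X → ℝ) (hQpos : ∀ x, 0 < Q x) (hQ1 : ∑ x, Q x = 1)
    (π : Θ → ℝ) (hπ : ∀ θ, 0 ≤ π θ) (hπ1 : ∑ θ, π θ = 1)
    (P : Θ → X → ℝ) (hP : ∀ θ x, 0 ≤ P θ x) (hP1 : ∀ θ, ∑ x, P θ x = 1)
    (n : ℕ) (hn : 1 ≤ n) :
    ∑ x : Fin n → X, (∑ θ, π θ * ∏ t, P θ (x t)) ^ 2 / ∏ t, Q (x t)
      = ∑ θ, ∑ θ', π θ * π θ' * (∑ x, P θ x * P θ' x / Q x) ^ n := by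
  have key : ∀ θ θ' : Θ, ∑ x : Fin n → X, ∏ t, (P θ (x t) * P θ' (x t) / Q (x t))
      = (∑ x, P θ x * P θ' x / Q x) ^ n := by
    intro θ θ'
    rw [Finset.sum_pow' univ (fun x => P θ x * P θ' x / Q x) n]
    rw [Fintype.sum_equiv (Equiv.refl _)]
    · rfl
    · intro x; rfl
  calc ∑ x : Fin n → X, (∑ θ, π θ * ∏ t, P θ (x t)) ^ 2 / ∏ t, Q (x t)
      = ∑ x : Fin n → X, ∑ θ, ∑ θ', π θ * π θ' *
          ∏ t, (P θ (x t) * P θ' (x t) / Q (x t)) := by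
        refine Finset.sum_congr rfl fun x _ => ?_
        have hQx : (∏ t, Q (x t)) ≠ 0 := by
          exact (Finset.prod_pos fun t _ => hQpos (x t)).ne'
        rw [sq, Finset.sum_mul_sum]
        rw [Finset.sum_div]
        refine Finset.sum_congr rfl fun θ _ => ?_
        rw [Finset.sum_div]
        refine Finset.sum_congr rfl fun θ' _ => ?_
        rw [Finset.prod_div_distrib, Finset.prod_mul_distrib]
        field_simp
    _ = ∑ θ, ∑ θ', π θ * π θ' * (∑ x, P θ x * P θ' x / Q x) ^ n := by
        rw [Finset.sum_comm]
        refine Finset.sum_congr rfl fun θ _ => ?_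
        rw [Finset.sum_comm]
        refine Finset.sum_congr rfl fun θ' _ => ?_
        rw [← Finset.mul_sum, key]
end

section
/- Let P be a probability mass function on a countable set whose every nonzero mass is at least 1/ℓ (so its support size S satisfies S ≤ ℓ). Draw k i.i.d. samples from P and let C be the number of distinct values observed. Then for every integer Δ ≥ 1, P( S − C ≥ Δ ) ≤ binom(ℓ, Δ)·(1 − Δ/ℓ)^k. -/
open Finset MeasureTheory
open scoped ENNReal NNReal

/-- Let `p` be a probability mass function on a countable set whose every
nonzero mass is at least `1/ℓ` (so the support size `S` satisfies `S ≤ ℓ`). Draw `k` i.i.d.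
samples from `p` and let `C` be the number of distinct values observed. Then for every
integer `Δ ≥ 1`, `P(S − C ≥ Δ) ≤ binom(ℓ,Δ)·(1 − Δ/ℓ)^k`. -/
theorem stmt15 {α : Type*} [Countable α] [MeasurableSpace α] [MeasurableSingletonClass α]
    (p : PMF α) (ℓ : ℕ) (hℓ : 1 ≤ ℓ)
    (hmin : ∀ a, p a ≠ 0 → (1 : ℝ≥0∞) / ℓ ≤ p a)
    (k Δ : ℕ) (hΔ : 1 ≤ Δ) :
    Measure.pi (fun _ : Fin k => p.toMeasure)
        {x : Fin k → α | (Δ : ℤ) ≤ (p.support.ncard : ℤ) - ((Set.range x).ncard : ℤ)}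
      ≤ (ℓ.choose Δ : ℝ≥0∞) * (1 - (Δ : ℝ≥0∞) / ℓ) ^ k := by
  classical
  have hℓ0 : (ℓ : ℝ≥0∞) ≠ 0 := by
    simp only [ne_eq, Nat.cast_eq_zero]; omega
  have hℓtop : (ℓ : ℝ≥0∞) ≠ ∞ := ENNReal.natCast_ne_top ℓ
  have hε : (1 : ℝ≥0∞) / ℓ ≠ 0 := by
    simp [ENNReal.div_eq_zero_iff, hℓ0, hℓtop]
  -- the support equals the set of points of mass at least 1/ℓ
  have hsupp : p.support = {a | (1 : ℝ≥0∞) / ℓ ≤ p a} := by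
    ext a
    simp only [PMF.mem_support_iff, Set.mem_setOf_eq]
    constructor
    · exact hmin a
    · intro h h0
      rw [h0] at h
      exact hε (le_antisymm h zero_le)
  -- the support is finite with card ≤ ℓ
  obtain ⟨hfin, hcard⟩ :=
    ENNReal.finset_card_const_le_le_of_tsum_le (a := fun a => p a) (c := 1) ENNReal.one_ne_top
      (le_of_eq p.tsum_coe) hε
  have hpfin : p.support.Finite := hsupp ▸ hfin
  set F : Finset α := hfin.toFinset with hF
  have hFsupp : p.support = ↑F := by rw [hsupp]; simp [hF]
  have hSF : p.support.ncard = F.card := by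
    rw [hFsupp]; simp [Set.ncard_coe_finset]
  have hSℓ : F.card ≤ ℓ := by
    have h2 : (F.card : ℝ≥0∞) ≤ ℓ := by
      rw [one_div, one_div, inv_inv] at hcard
      exact hcard
    exact_mod_cast h2
  -- union bound decomposition
  have hsub : {x : Fin k → α | (Δ : ℤ) ≤ (p.support.ncard : ℤ) - ((Set.range x).ncard : ℤ)}
      ⊆ ⋃ T ∈ F.powersetCard Δ, Set.pi Set.univ (fun _ : Fin k => (↑(T : Finset α))ᶜ) := by
    intro x hx
    simp only [Set.mem_setOf_eq] at hx
    have hr : (Set.range x).Finite := Set.finite_range x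
    set R : Finset α := hr.toFinset with hR
    have hCR : (Set.range x).ncard = R.card := by
      rw [hR, Set.ncard_eq_toFinset_card _ hr]
    rw [hSF, hCR] at hx
    have hΔle : Δ + R.card ≤ F.card := by omega
    have hsd : Δ ≤ (F \ R).card := le_trans (by omega) (Finset.le_card_sdiff R F)
    obtain ⟨T, hTsub, hTcard⟩ := Finset.exists_subset_card_eq hsd
    refine Set.mem_biUnion (Finset.mem_powersetCard.2 ⟨hTsub.trans (Finset.sdiff_subset), hTcard⟩) ?_
    intro i _
    simp only [Set.mem_compl_iff, Finset.mem_coe]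
    intro hmem
    have : x i ∈ F \ R := hTsub hmem
    have hxiR : x i ∈ R := by
      rw [hR, Set.Finite.mem_toFinset]; exact Set.mem_range_self i
    exact (Finset.mem_sdiff.1 this).2 hxiR
  -- the bound for each piece
  have hpiece : ∀ T ∈ F.powersetCard Δ,
      Measure.pi (fun _ : Fin k => p.toMeasure)
        (Set.pi Set.univ (fun _ : Fin k => (↑(T : Finset α))ᶜ))
        ≤ (1 - (Δ : ℝ≥0∞) / ℓ) ^ k := by
    intro T hT
    obtain ⟨hTsub, hTcard⟩ := Finset.mem_powersetCard.1 hT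
    rw [Measure.pi_pi, Finset.prod_const, Finset.card_univ, Fintype.card_fin]
    have hmass : (Δ : ℝ≥0∞) / ℓ ≤ p.toMeasure ↑T := by
      rw [PMF.toMeasure_apply_finset]
      calc (Δ : ℝ≥0∞) / ℓ = Δ • ((1 : ℝ≥0∞) / ℓ) := by
            rw [nsmul_eq_mul, one_div, div_eq_mul_inv]
        _ = ∑ _a ∈ T, (1 : ℝ≥0∞) / ℓ := by rw [Finset.sum_const, hTcard]
        _ ≤ ∑ a ∈ T, p a := by
            refine Finset.sum_le_sum fun a ha => ?_
            have : a ∈ p.support := by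
              rw [hFsupp]; exact hTsub ha
            rw [hsupp] at this
            exact this
    have hcompl : p.toMeasure (↑T : Set α)ᶜ ≤ 1 - (Δ : ℝ≥0∞) / ℓ := by
      rw [prob_compl_eq_one_sub T.measurableSet]
      exact tsub_le_tsub_left hmass 1
    exact pow_le_pow_left' hcompl k
  calc Measure.pi (fun _ : Fin k => p.toMeasure)
        {x : Fin k → α | (Δ : ℤ) ≤ (p.support.ncard : ℤ) - ((Set.range x).ncard : ℤ)}
      ≤ Measure.pi (fun _ : Fin k => p.toMeasure)
          (⋃ T ∈ F.powersetCard Δ, Set.pi Set.univ (fun _ : Fin k => (↑(T : Finset α))ᶜ)) :=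
        measure_mono hsub
    _ ≤ ∑ T ∈ F.powersetCard Δ, Measure.pi (fun _ : Fin k => p.toMeasure)
          (Set.pi Set.univ (fun _ : Fin k => (↑(T : Finset α))ᶜ)) :=
        measure_biUnion_finset_le _ _
    _ ≤ (F.powersetCard Δ).card • (1 - (Δ : ℝ≥0∞) / ℓ) ^ k :=
        Finset.sum_le_card_nsmul _ _ _ hpiece
    _ = (F.card.choose Δ : ℝ≥0∞) * (1 - (Δ : ℝ≥0∞) / ℓ) ^ k := by
        rw [Finset.card_powersetCard, nsmul_eq_mul]
    _ ≤ (ℓ.choose Δ : ℝ≥0∞) * (1 - (Δ : ℝ≥0∞) / ℓ) ^ k := by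
        exact mul_le_mul_left (by exact_mod_cast Nat.choose_le_choose Δ hSℓ) _
end
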